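/- Let G be a finite simple graph in which every connected component has maximum degree at least two. Then ∂_s(G) ≥ β(G)/2, i.e., 2·∂_s(G) ≥ β(G), where β(G) is the vertex cover number of G. -/

import Mathlib

open Finset

namespace StrongDifferential

variable {V : Type*} [Fintype V] [DecidableEq V] (G : SimpleGraph V) [DecidableRel G.Adj]

/-- The external neighbourhood `N_e(D)` of a set `D`: vertices outside `D`
with a neighbour in `D`. -/
def extNbhd (D : Finset V) : Finset V :=
  univ.filter fun u => u ∉ D ∧ ∃ v ∈ D, G.Adj u v

/-- The external private neighbourhood `epn(v, D)` of `v` with respect to `D`. -/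
def epn (v : V) (D : Finset V) : Finset V :=
  univ.filter fun u => u ∉ D ∧ G.neighborFinset u ∩ D = {v}

/-- `D_w`: the vertices of `D` having a nonempty external private neighbourhood. -/
def weak (D : Finset V) : Finset V :=
  D.filter fun v => (epn G v D).Nonempty

/-- `D_s = D \ D_w`. -/
def strong (D : Finset V) : Finset V :=
  D \ weak G D

/-- The strong differential `∂ₛ(D) = |N_e(D)| - |D_w|` of a set `D`. -/
def sdiffSet (D : Finset V) : ℤ :=
  (extNbhd G D).card - (weak G D).card

/-- The strong differential `∂ₛ(G) = max {∂ₛ(D) : D ⊆ V(G)}` of the graph `G`. -/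
def sdiff : ℤ :=
  (univ : Finset V).powerset.sup' ⟨∅, empty_mem_powerset _⟩ (sdiffSet G)

/-- The differential `∂(D) = |N_e(D)| - |D|` of a set `D`. -/
def diffSet (D : Finset V) : ℤ :=
  (extNbhd G D).card - D.card

/-- The differential `∂(G) = max {∂(D) : D ⊆ V(G)}` of the graph `G`. -/
def gdiff : ℤ :=
  (univ : Finset V).powerset.sup' ⟨∅, empty_mem_powerset _⟩ (diffSet G)

/-- A dominating set: every vertex outside `D` has a neighbour in `D`. -/
def IsDomSet (D : Finset V) : Prop :=
  ∀ v, v ∉ D → ∃ u ∈ D, G.Adj v u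

/-- The domination number `γ(G)`. -/
noncomputable def gamma : ℕ :=
  sInf {k | ∃ D : Finset V, IsDomSet G D ∧ D.card = k}

/-- A 2-dominating set: every vertex outside `D` has at least two neighbours in `D`. -/
def Is2DomSet (D : Finset V) : Prop :=
  ∀ v, v ∉ D → 2 ≤ (G.neighborFinset v ∩ D).card

/-- The 2-domination number `γ₂(G)`. -/
noncomputable def gamma2 : ℕ :=
  sInf {k | ∃ D : Finset V, Is2DomSet G D ∧ D.card = k}

/-- An Italian dominating function: `f : V → {0,1,2}` such that every
vertex of weight `0` has total weight at least `2` on its neighbourhood. -/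
def IsIDF (f : V → ℕ) : Prop :=
  (∀ v, f v ≤ 2) ∧ ∀ v, f v = 0 → 2 ≤ ∑ u ∈ G.neighborFinset v, f u

/-- The Italian domination number `γ_I(G)`. -/
noncomputable def italian : ℕ :=
  sInf {k | ∃ f : V → ℕ, IsIDF G f ∧ ∑ v, f v = k}

/-- `σ(G)`: the number of vertices adjacent to at least two leaves. -/
def sigmaSupp : ℕ :=
  (univ.filter fun v => 2 ≤ ((G.neighborFinset v).filter fun u => G.degree u = 1).card).card

/-- The independence number `α(G)`. -/
noncomputable def indepNum : ℕ :=
  sSup {k | ∃ S : Finset V, (∀ u ∈ S, ∀ w ∈ S, u ≠ w → ¬ G.Adj u w) ∧ S.card = k}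

/-- The vertex cover number `β(G)`. -/
noncomputable def vcNum : ℕ :=
  sInf {k | ∃ S : Finset V, (∀ u v, G.Adj u v → u ∈ S ∨ v ∈ S) ∧ S.card = k}

/-- A semitotal dominating set: a dominating set in which every vertex is
within distance two of another vertex of the set. -/
def IsSemitotalDomSet (D : Finset V) : Prop :=
  IsDomSet G D ∧ ∀ v ∈ D, ∃ u ∈ D, u ≠ v ∧ (G.Adj v u ∨ ∃ w, G.Adj v w ∧ G.Adj w u)

/-- The semitotal domination number `γ_{t2}(G)`. -/
noncomputable def gammaT2 : ℕ :=
  sInf {k | ∃ D : Finset V, IsSemitotalDomSet G D ∧ D.card = k}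


omit [Fintype V] [DecidableEq V] [DecidableRel G.Adj] in
lemma walk_mem (s : Set V) (hs : ∀ x ∈ s, ∀ y, G.Adj x y → y ∈ s) :
    ∀ {u v : V}, G.Walk u v → u ∈ s → v ∈ s
  | _, _, SimpleGraph.Walk.nil, hu => hu
  | _, _, SimpleGraph.Walk.cons h p, hu => walk_mem s hs p (hs _ hu _ h)

lemma sdiff_ge_of_two_out (Z : Finset V)
    (hZ : ∀ z ∈ Z, 2 ≤ ((G.neighborFinset z).filter (· ∉ Z)).card) :
    (Z.card : ℤ) ≤ sdiff G := by
  have hD : (Zᶜ : Finset V) ∈ (univ : Finset V).powerset := mem_powerset.2 (subset_univ _)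
  have key : sdiffSet G Zᶜ = Z.card := by
    have hnb : ∀ z ∈ Z, (G.neighborFinset z).filter (· ∉ Z) =
        G.neighborFinset z ∩ Zᶜ := by
      intro z _; ext x; simp [mem_filter, mem_inter, mem_compl]
    have hext : extNbhd G Zᶜ = Z := by
      ext u
      simp only [extNbhd, mem_filter, mem_univ, true_and, mem_compl, not_not]
      constructor
      · rintro ⟨hu, -⟩; exact hu
      · intro hu
        refine ⟨hu, ?_⟩
        have h2 := hZ u hu
        rw [hnb u hu] at h2
        have : (G.neighborFinset u ∩ Zᶜ).Nonempty := by
          rw [← card_pos]; omega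
        obtain ⟨x, hx⟩ := this
        rw [mem_inter, SimpleGraph.mem_neighborFinset] at hx
        exact ⟨x, mem_compl.1 hx.2, hx.1⟩
    have hweak : weak G Zᶜ = ∅ := by
      rw [eq_empty_iff_forall_notMem]
      intro v hv
      rw [weak, mem_filter] at hv
      obtain ⟨hvD, u, hu⟩ := hv
      rw [epn, mem_filter] at hu
      obtain ⟨-, huD, hcard⟩ := hu
      have huZ : u ∈ Z := by rwa [mem_compl, not_not] at huD
      have h2 := hZ u huZ
      rw [hnb u huZ, hcard, card_singleton] at h2
      omega
    rw [sdiffSet, hext, hweak]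
    simp
  calc (Z.card : ℤ) = sdiffSet G Zᶜ := key.symm
    _ ≤ sdiff G := Finset.le_sup' (sdiffSet G) hD

omit [Fintype V] in
lemma maxcut (W R : Finset V) (hRW : R ⊆ W)
    (hnb : ∀ r ∈ R, ∃ s ∈ W, G.Adj r s) :
    ∃ Z ⊆ W, W.card ≤ 2 * Z.card ∧
      ∀ z ∈ Z, z ∈ R → ∃ s ∈ W, s ∉ Z ∧ G.Adj z s := by
  classical
  set cutS : Finset V → Finset (V × V) :=
    fun X => (X ×ˢ (W \ X)).filter fun p => G.Adj p.1 p.2 with hcutS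
  obtain ⟨X₀, hX₀mem, hX₀max⟩ :=
    Finset.exists_max_image (W.powerset) (fun X => (cutS X).card)
      ⟨∅, empty_mem_powerset _⟩
  rw [mem_powerset] at hX₀mem
  have claim1 : ∀ r ∈ R, r ∈ X₀ → ∃ s ∈ W, s ∉ X₀ ∧ G.Adj r s := by
    intro r hrR hrX
    by_contra hno
    push_neg at hno
    have hall : ∀ s ∈ W, G.Adj r s → s ∈ X₀ := fun s hs ha =>
      by_contra fun hc => hno s hs hc ha
    obtain ⟨s, hsW, hadj⟩ := hnb r hrR
    have hsX : s ∈ X₀ := hall s hsW hadj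
    have hsr : s ≠ r := fun h => G.irrefl (h ▸ hadj.symm)
    set X' := X₀.erase r with hX'
    have hsub : cutS X₀ ⊆ cutS X' := by
      intro p hp
      rw [hcutS, mem_filter, mem_product, mem_sdiff] at hp ⊢
      obtain ⟨⟨h1, h2, h3⟩, h4⟩ := hp
      have hp1r : p.1 ≠ r := by
        rintro rfl
        exact h3 (hall p.2 h2 h4)
      refine ⟨⟨mem_erase.2 ⟨hp1r, h1⟩, h2, fun hc => h3 (mem_of_mem_erase hc)⟩, h4⟩
    have hnew : (s, r) ∈ cutS X' ∧ (s, r) ∉ cutS X₀ := by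
      constructor
      · rw [hcutS, mem_filter, mem_product, mem_sdiff]
        exact ⟨⟨mem_erase.2 ⟨hsr, hsX⟩, hRW hrR, notMem_erase r X₀⟩, hadj.symm⟩
      · rw [hcutS, mem_filter, mem_product, mem_sdiff]
        rintro ⟨⟨-, -, h3⟩, -⟩
        exact h3 hrX
    have hlt : (cutS X₀).card < (cutS X').card :=
      card_lt_card (ssubset_iff_of_subset hsub |>.2 ⟨(s, r), hnew.1, hnew.2⟩)
    have := hX₀max X' (mem_powerset.2 ((erase_subset _ _).trans hX₀mem))
    omega
  have claim2 : ∀ r ∈ R, r ∉ X₀ → ∃ s, s ∈ X₀ ∧ G.Adj r s := by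
    intro r hrR hrX
    by_contra hno
    push_neg at hno
    obtain ⟨s, hsW, hadj⟩ := hnb r hrR
    have hsX : s ∉ X₀ := fun h => hno s h hadj
    have hsr : s ≠ r := fun h => G.irrefl (h ▸ hadj.symm)
    set X' := insert r X₀ with hX'
    have hsub : cutS X₀ ⊆ cutS X' := by
      intro p hp
      rw [hcutS, mem_filter, mem_product, mem_sdiff] at hp ⊢
      obtain ⟨⟨h1, h2, h3⟩, h4⟩ := hp
      have hp2r : p.2 ≠ r := by
        rintro rfl
        exact hno p.1 h1 h4.symm
      exact ⟨⟨mem_insert_of_mem h1, h2, fun hc =>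
        (mem_insert.1 hc).elim hp2r h3⟩, h4⟩
    have hnew : (r, s) ∈ cutS X' ∧ (r, s) ∉ cutS X₀ := by
      constructor
      · rw [hcutS, mem_filter, mem_product, mem_sdiff]
        refine ⟨⟨mem_insert_self r X₀, hsW, fun hc => ?_⟩, hadj⟩
        exact (mem_insert.1 hc).elim hsr hsX
      · rw [hcutS, mem_filter, mem_product, mem_sdiff]
        rintro ⟨⟨h1, -⟩, -⟩
        exact hrX h1
    have hlt : (cutS X₀).card < (cutS X').card :=
      card_lt_card (ssubset_iff_of_subset hsub |>.2 ⟨(r, s), hnew.1, hnew.2⟩)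
    have := hX₀max X' (mem_powerset.2 (insert_subset (hRW hrR) hX₀mem))
    omega
  have hcards : X₀.card + (W \ X₀).card = W.card := by
    have := card_le_card hX₀mem
    rw [card_sdiff_of_subset hX₀mem]; omega
  by_cases hbig : W.card ≤ 2 * X₀.card
  · refine ⟨X₀, hX₀mem, hbig, ?_⟩
    intro z hz hzR
    exact claim1 z hzR hz
  · refine ⟨W \ X₀, sdiff_subset, ?_, ?_⟩
    · have : X₀.card ≤ W.card := card_le_card hX₀mem
      omega
    · intro z hz hzR
      obtain ⟨s, hsX, hadj⟩ := claim2 z hzR (mem_sdiff.1 hz).2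
      exact ⟨s, hX₀mem hsX, fun hc => (mem_sdiff.1 hc).2 hsX, hadj⟩

lemma good_cover (h : ∀ v : V, ∃ u : V, G.Reachable v u ∧ 2 ≤ G.degree u) :
    ∃ C : Finset V, (∀ u v, G.Adj u v → u ∈ C ∨ v ∈ C) ∧ C.card = vcNum G ∧
      (∀ c ∈ C, ∃ a, a ∉ C ∧ G.Adj c a) ∧ (∀ c ∈ C, 2 ≤ G.degree c) := by
  classical
  have hne : {k | ∃ S : Finset V, (∀ u v, G.Adj u v → u ∈ S ∨ v ∈ S) ∧ S.card = k}.Nonempty :=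
    ⟨(univ : Finset V).card, univ, fun u v _ => Or.inl (mem_univ u), rfl⟩
  obtain ⟨C₀, hC₀cov, hC₀card⟩ := Nat.sInf_mem hne
  set lc : Finset V → ℕ := fun S => (S.filter fun c => G.degree c = 1).card with hlc
  have hTne : {m | ∃ S : Finset V, (∀ u v, G.Adj u v → u ∈ S ∨ v ∈ S) ∧
      S.card = vcNum G ∧ lc S = m}.Nonempty := ⟨lc C₀, C₀, hC₀cov, hC₀card, rfl⟩
  obtain ⟨C, hcov, hcard, hlcC⟩ := Nat.sInf_mem hTne
  have P1 : ∀ c ∈ C, ∃ a, a ∉ C ∧ G.Adj c a := by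
    intro c hc
    by_contra hno
    push_neg at hno
    have hall : ∀ a, G.Adj c a → a ∈ C := fun a ha =>
      by_contra fun hcon => hno a hcon ha
    have hcov' : ∀ u v, G.Adj u v → u ∈ C.erase c ∨ v ∈ C.erase c := by
      intro u v hadj
      by_cases huc : u = c
      · have hadj' : G.Adj c v := huc ▸ hadj
        exact Or.inr (mem_erase.2 ⟨hadj'.ne', hall v hadj'⟩)
      · by_cases hvc : v = c
        · have hadj' : G.Adj c u := hvc ▸ hadj.symm
          exact Or.inl (mem_erase.2 ⟨huc, hall u hadj'⟩)
        · rcases hcov u v hadj with hu | hv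
          · exact Or.inl (mem_erase.2 ⟨huc, hu⟩)
          · exact Or.inr (mem_erase.2 ⟨hvc, hv⟩)
    have h1 : vcNum G ≤ (C.erase c).card := Nat.sInf_le ⟨C.erase c, hcov', rfl⟩
    have h2 : (C.erase c).card = C.card - 1 := card_erase_of_mem hc
    have h3 : 1 ≤ C.card := card_pos.2 ⟨c, hc⟩
    omega
  have P2 : ∀ c ∈ C, G.degree c ≠ 1 := by
    intro c hc hdeg
    obtain ⟨a, haC, hadj⟩ := P1 c hc
    have hnbc : G.neighborFinset c = {a} := by
      have h1 : (G.neighborFinset c).card = 1 := hdeg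
      obtain ⟨x, hx⟩ := card_eq_one.1 h1
      have : a ∈ G.neighborFinset c := (SimpleGraph.mem_neighborFinset _ _ _).2 hadj
      rw [hx] at this ⊢
      rw [mem_singleton] at this
      rw [this]
    have hadeg : 2 ≤ G.degree a := by
      rcases Nat.lt_or_ge (G.degree a) 2 with hlt | hge
      · exfalso
        have hapos : 1 ≤ G.degree a := by
          have : c ∈ G.neighborFinset a := (SimpleGraph.mem_neighborFinset _ _ _).2 hadj.symm
          have := card_pos.2 ⟨c, this⟩
          exact this
        have hadeg1 : G.degree a = 1 := by omega
        have hnba : G.neighborFinset a = {c} := by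
          obtain ⟨x, hx⟩ := card_eq_one.1 (hadeg1 : (G.neighborFinset a).card = 1)
          have : c ∈ G.neighborFinset a := (SimpleGraph.mem_neighborFinset _ _ _).2 hadj.symm
          rw [hx] at this ⊢
          rw [mem_singleton] at this
          rw [this]
        obtain ⟨u, hreach, hu2⟩ := h c
        have hclosed : ∀ x ∈ ({c, a} : Set V), ∀ y, G.Adj x y → y ∈ ({c, a} : Set V) := by
          intro x hx y hxy
          rcases hx with rfl | rfl
          · have : y ∈ G.neighborFinset x := (SimpleGraph.mem_neighborFinset _ _ _).2 hxy
            rw [hnbc, mem_singleton] at this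
            exact Or.inr this
          · have : y ∈ G.neighborFinset x := (SimpleGraph.mem_neighborFinset _ _ _).2 hxy
            rw [hnba, mem_singleton] at this
            exact Or.inl this
        have hu : u ∈ ({c, a} : Set V) :=
          walk_mem G _ hclosed hreach.some (Or.inl rfl)
        rcases hu with rfl | rfl
        · omega
        · omega
      · exact hge
    have haC' : a ∉ C.erase c := fun hx => haC (mem_of_mem_erase hx)
    set C' := insert a (C.erase c) with hC'
    have hcov' : ∀ u v, G.Adj u v → u ∈ C' ∨ v ∈ C' := by
      intro u v hadj
      by_cases huc : u = c
      · have hv : v ∈ G.neighborFinset c := by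
          rw [SimpleGraph.mem_neighborFinset]; exact huc ▸ hadj
        rw [hnbc, mem_singleton] at hv
        rw [hv]
        exact Or.inr (mem_insert_self a _)
      · by_cases hvc : v = c
        · have hu : u ∈ G.neighborFinset c := by
            rw [SimpleGraph.mem_neighborFinset]; exact hvc ▸ hadj.symm
          rw [hnbc, mem_singleton] at hu
          rw [hu]
          exact Or.inl (mem_insert_self a _)
        · rcases hcov u v hadj with hu | hv
          · exact Or.inl (mem_insert_of_mem (mem_erase.2 ⟨huc, hu⟩))
          · exact Or.inr (mem_insert_of_mem (mem_erase.2 ⟨hvc, hv⟩))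
    have hcard' : C'.card = vcNum G := by
      rw [hC', card_insert_of_notMem haC', card_erase_of_mem hc]
      have h3 : 1 ≤ C.card := card_pos.2 ⟨c, hc⟩
      omega
    have hlcless : lc C' < lc C := by
      have hsub : C'.filter (fun x => G.degree x = 1) ⊆
          (C.filter (fun x => G.degree x = 1)).erase c := by
        intro x hx
        rw [mem_filter] at hx
        obtain ⟨hx1, hx2⟩ := hx
        rcases mem_insert.1 hx1 with rfl | hx3
        · omega
        · exact mem_erase.2 ⟨(mem_erase.1 hx3).1, mem_filter.2 ⟨mem_of_mem_erase hx3, hx2⟩⟩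
      have hcmem : c ∈ C.filter (fun x => G.degree x = 1) := mem_filter.2 ⟨hc, hdeg⟩
      have h1 := card_le_card hsub
      have h2 := card_erase_of_mem hcmem
      have h3 := card_pos.2 ⟨c, hcmem⟩
      simp only [hlc]
      omega
    have hmem : lc C' ∈ {m | ∃ S : Finset V, (∀ u v, G.Adj u v → u ∈ S ∨ v ∈ S) ∧
        S.card = vcNum G ∧ lc S = m} := ⟨C', hcov', hcard', rfl⟩
    have := Nat.sInf_le hmem
    omega
  refine ⟨C, hcov, hcard, P1, ?_⟩
  intro c hc
  obtain ⟨a, -, hadj⟩ := P1 c hc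
  have h1 : 1 ≤ G.degree c := by
    have : a ∈ G.neighborFinset c := (SimpleGraph.mem_neighborFinset _ _ _).2 hadj
    exact card_pos.2 ⟨a, this⟩
  have := P2 c hc
  omega

theorem stmt_18 {V : Type*} [Fintype V] [DecidableEq V] (G : SimpleGraph V)
    [DecidableRel G.Adj] (h : ∀ v : V, ∃ u : V, G.Reachable v u ∧ 2 ≤ G.degree u) :
    (vcNum G : ℤ) ≤ 2 * sdiff G := by
  classical
  obtain ⟨C, hcov, hcard, P1, hdeg2⟩ := good_cover G h
  set R := C.filter (fun c => ((G.neighborFinset c).filter (· ∉ C)).card < 2) with hR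
  have hnb : ∀ r ∈ R, ∃ s ∈ C, G.Adj r s := by
    intro r hr
    rw [hR, mem_filter] at hr
    obtain ⟨hrC, hout⟩ := hr
    have hdeg := hdeg2 r hrC
    have hsplit := card_filter_add_card_filter_not
      (s := G.neighborFinset r) (p := fun x => x ∉ C)
    have hdegeq : (G.neighborFinset r).card = G.degree r := rfl
    obtain ⟨s, hs⟩ := card_pos.1 (by omega :
      0 < ((G.neighborFinset r).filter (fun x => ¬ x ∉ C)).card)
    rw [mem_filter, SimpleGraph.mem_neighborFinset] at hs
    exact ⟨s, not_not.1 hs.2, hs.1⟩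
  obtain ⟨Z, hZC, hZcard, hZprop⟩ := maxcut G C R (filter_subset _ _) hnb
  have hZ2 : ∀ z ∈ Z, 2 ≤ ((G.neighborFinset z).filter (· ∉ Z)).card := by
    intro z hz
    have hzC : z ∈ C := hZC hz
    by_cases hzR : z ∈ R
    · obtain ⟨a, haC, hadj⟩ := P1 z hzC
      obtain ⟨s, hsC, hsZ, hadjs⟩ := hZprop z hz hzR
      have has : a ≠ s := fun hc => haC (hc ▸ hsC)
      have hsub : ({a, s} : Finset V) ⊆ (G.neighborFinset z).filter (· ∉ Z) := by
        intro x hx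
        rcases mem_insert.1 hx with rfl | hx2
        · exact mem_filter.2 ⟨(SimpleGraph.mem_neighborFinset _ _ _).2 hadj,
            fun hc => haC (hZC hc)⟩
        · rw [mem_singleton] at hx2
          subst hx2
          exact mem_filter.2 ⟨(SimpleGraph.mem_neighborFinset _ _ _).2 hadjs, hsZ⟩
      have h2 : ({a, s} : Finset V).card = 2 := by
        rw [card_insert_of_notMem (by rwa [mem_singleton]), card_singleton]
      calc 2 = ({a, s} : Finset V).card := h2.symm
        _ ≤ _ := card_le_card hsub
    · rw [hR, mem_filter] at hzR
      push_neg at hzR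
      have hout := hzR hzC
      have hsub : (G.neighborFinset z).filter (· ∉ C) ⊆
          (G.neighborFinset z).filter (· ∉ Z) := by
        intro x hx
        rw [mem_filter] at hx ⊢
        exact ⟨hx.1, fun hc => hx.2 (hZC hc)⟩
      exact le_trans hout (card_le_card hsub)
  have h1 : (Z.card : ℤ) ≤ sdiff G := sdiff_ge_of_two_out G Z hZ2
  have h2 : (vcNum G : ℤ) ≤ 2 * (Z.card : ℤ) := by
    rw [← hcard]; exact_mod_cast hZcard
  linarith


end StrongDifferential
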